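/- Gauss-Lucas theorem for rearrangeable entire functions: let f(z) = z^q g(z) where q ≥ 0 and g is a canonical product of genus p whose nonzero roots (γ_n) can be ordered so that ∑_{n=1}^N γ_n^{-r} → 0 as N → ∞ for each r = 1,…,p. Then every zero of f' lies in the closure of the convex hull of the zero set of f. -/

import Mathlib

open Filter Finset

lemma GLaux_closed_form (p : ℕ) (w γ : ℂ) (hγ : γ ≠ 0) (hwγ : w ≠ γ) :
    (w - γ)⁻¹ + ∑ r ∈ Icc 1 p, w ^ (r - 1) * (γ⁻¹) ^ r
      = w ^ p * (γ⁻¹) ^ p * (w - γ)⁻¹ := by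
  have h1 : w - γ ≠ 0 := sub_ne_zero.mpr hwγ
  induction p with
  | zero => simp
  | succ p ih =>
    rw [Finset.sum_Icc_succ_top (by omega), ← add_assoc, ih]
    have h2 : p + 1 - 1 = p := by omega
    rw [h2]
    field_simp
    have hγ' : γ * γ⁻¹ = 1 := mul_inv_cancel₀ hγ
    linear_combination (-(w ^ p) * γ⁻¹ ^ p) * hγ'

lemma GLaux_factor_deriv (p : ℕ) (w γ : ℂ) (hγ : γ ≠ 0) (hwγ : w ≠ γ) :
    HasDerivAt (fun z => (1 - z / γ) * Complex.exp (∑ r ∈ Icc 1 p, (r : ℂ)⁻¹ * (z / γ) ^ r))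
      (((1 - w / γ) * Complex.exp (∑ r ∈ Icc 1 p, (r : ℂ)⁻¹ * (w / γ) ^ r)) *
        ((w - γ)⁻¹ + ∑ r ∈ Icc 1 p, w ^ (r - 1) * (γ⁻¹) ^ r)) w := by
  have hsub : w - γ ≠ 0 := sub_ne_zero.mpr hwγ
  have hsum : HasDerivAt (fun z => ∑ r ∈ Icc 1 p, (r : ℂ)⁻¹ * (z / γ) ^ r)
      (∑ r ∈ Icc 1 p, w ^ (r - 1) * (γ⁻¹) ^ r) w := by
    refine HasDerivAt.fun_sum fun r hr => ?_
    rw [Finset.mem_Icc] at hr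
    obtain ⟨s, rfl⟩ : ∃ s, r = s + 1 := ⟨r - 1, by omega⟩
    have h := (((hasDerivAt_id w).div_const γ).pow (s + 1)).const_mul ((s + 1 : ℕ) : ℂ)⁻¹
    refine h.congr_deriv (Eq.symm ?_)
    have hs1 : ((s : ℂ) + 1) ≠ 0 := Nat.cast_add_one_ne_zero s
    simp only [Nat.add_sub_cancel, div_pow, Nat.cast_add, Nat.cast_one, id_eq]
    rw [← mul_assoc, ← mul_assoc, inv_mul_cancel₀ hs1, one_mul]
    simp only [div_eq_mul_inv, inv_pow, pow_succ, one_mul]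
    ring
  have hlin : HasDerivAt (fun z => 1 - z / γ) (-γ⁻¹) w := by
    have := ((hasDerivAt_id w).div_const γ).const_sub 1
    simpa [one_div] using this
  have h := hlin.mul hsum.cexp
  refine h.congr_deriv (Eq.symm ?_)
  have key : (1 - w / γ) * (w - γ)⁻¹ = -γ⁻¹ := by
    field_simp
    ring
  linear_combination (Complex.exp (∑ r ∈ Icc 1 p, (r : ℂ)⁻¹ * (w / γ) ^ r)) * key

set_option maxHeartbeats 1600000 in
theorem gauss_lucas_rearrangeable (p q : ℕ) (γ : ℕ → ℂ)
    (hγ : ∀ n, γ n ≠ 0)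
    (hgenus : Summable (fun n => (1 / ‖γ n‖) ^ (p + 1)))
    (g : ℂ → ℂ)
    (hg : TendstoLocallyUniformly
      (fun N z => ∏ n ∈ range N,
        (1 - z / γ n) * Complex.exp (∑ r ∈ Icc 1 p, (r : ℂ)⁻¹ * (z / γ n) ^ r))
      g atTop)
    (hrearr : ∃ π : Equiv.Perm ℕ, ∀ r ∈ Icc 1 p,
      Tendsto (fun N => ∑ n ∈ range N, (γ (π n))⁻¹ ^ r) atTop (nhds 0))
    (f : ℂ → ℂ) (hf : ∀ z, f z = z ^ q * g z)
    (w : ℂ) (hw : deriv f w = 0) :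
    w ∈ closure (convexHull ℝ {z : ℂ | f z = 0}) := by
  classical
  by_contra hcon
  set Z : Set ℂ := {z : ℂ | f z = 0} with hZdef
  have hZsub : Z ⊆ closure (convexHull ℝ Z) :=
    (subset_convexHull ℝ Z).trans subset_closure
  set F : ℕ → ℂ → ℂ :=
    fun n z => (1 - z / γ n) * Complex.exp (∑ r ∈ Icc 1 p, (r : ℂ)⁻¹ * (z / γ n) ^ r)
    with hFdef
  have hg' : TendstoLocallyUniformly (fun N z => ∏ n ∈ range N, F n z) g atTop := hg
  rw [← tendstoLocallyUniformlyOn_univ] at hg'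
  -- g vanishes at each γ m
  have hgz : ∀ m, g (γ m) = 0 := by
    intro m
    have h1 : Tendsto (fun N => ∏ n ∈ range N, F n (γ m)) atTop (nhds (g (γ m))) :=
      hg'.tendsto_at (Set.mem_univ (γ m))
    have h2 : (fun N => ∏ n ∈ range N, F n (γ m)) =ᶠ[atTop] (fun _ => (0 : ℂ)) := by
      filter_upwards [eventually_ge_atTop (m + 1)] with N hN
      refine Finset.prod_eq_zero (i := m) (Finset.mem_range.mpr (by omega)) ?_
      simp [hFdef, div_self (hγ m)]
    exact tendsto_nhds_unique ((tendsto_congr' h2).mp h1) tendsto_const_nhds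
  have hγZ : ∀ m, γ m ∈ Z := fun m => by
    show f (γ m) = 0
    rw [hf, hgz m, mul_zero]
  have hwγ : ∀ m, w ≠ γ m := fun m h => hcon (h ▸ hZsub (hγZ m))
  have hfw : f w ≠ 0 := fun h => hcon (hZsub h)
  have hgw : g w ≠ 0 := by
    intro h
    exact hfw (by rw [hf w, h, mul_zero])
  -- differentiability of the partial products
  have hFdiff : ∀ n, Differentiable ℂ (F n) := by
    intro n
    refine ((differentiable_const (1:ℂ)).sub (differentiable_id.div_const (γ n))).mul ?_
    refine Differentiable.cexp (Differentiable.fun_sum fun r _ => ?_)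
    exact ((differentiable_id.div_const (γ n)).pow r).const_mul _
  have hGdiff : ∀ N, Differentiable ℂ (fun z => ∏ n ∈ range N, F n z) := by
    intro N z
    exact DifferentiableAt.fun_finsetProd (fun i _ => (hFdiff i).differentiableAt)
  have hgdiff : Differentiable ℂ g := by
    have h := hg'.differentiableOn
      (Eventually.of_forall fun N => (hGdiff N).differentiableOn) isOpen_univ
    rwa [← differentiableOn_univ]
  set T : ℕ → ℂ := fun n => (w - γ n)⁻¹ + ∑ r ∈ Icc 1 p, w ^ (r - 1) * ((γ n)⁻¹) ^ r
    with hTdef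
  have hGder : ∀ N, HasDerivAt (fun z => ∏ n ∈ range N, F n z)
      ((∏ n ∈ range N, F n w) * ∑ n ∈ range N, T n) w := by
    intro N
    have h := HasDerivAt.fun_finsetProd (u := range N) (f := F)
      (f' := fun n => F n w * T n)
      (fun i _ => GLaux_factor_deriv p w (γ i) (hγ i) (hwγ i))
    refine h.congr_deriv (Eq.symm ?_)
    rw [Finset.mul_sum]
    refine Finset.sum_congr rfl fun i hi => ?_
    rw [smul_eq_mul, ← mul_assoc, Finset.prod_erase_mul _ _ hi]
  have hFw_ne : ∀ n, F n w ≠ 0 := by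
    intro n
    refine mul_ne_zero ?_ (Complex.exp_ne_zero _)
    rw [sub_ne_zero]
    intro h
    exact hwγ n ((div_eq_one_iff_eq (hγ n)).mp h.symm)
  have hGw_ne : ∀ N, (∏ n ∈ range N, F n w) ≠ 0 :=
    fun N => Finset.prod_ne_zero_iff.mpr fun i _ => hFw_ne i
  have hGw_tend : Tendsto (fun N => ∏ n ∈ range N, F n w) atTop (nhds (g w)) :=
    hg'.tendsto_at (Set.mem_univ w)
  have hder_tend : Tendsto (fun N => deriv (fun z => ∏ n ∈ range N, F n z) w) atTop
      (nhds (deriv g w)) := by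
    have h := hg'.deriv (Eventually.of_forall fun N => (hGdiff N).differentiableOn) isOpen_univ
    exact h.tendsto_at (Set.mem_univ w)
  have hL : Tendsto (fun N => ∑ n ∈ range N, T n) atTop (nhds (deriv g w / g w)) := by
    have heq : ∀ N, ∑ n ∈ range N, T n
        = deriv (fun z => ∏ n ∈ range N, F n z) w / (∏ n ∈ range N, F n w) := by
      intro N
      rw [(hGder N).deriv, mul_comm, mul_div_assoc, div_self (hGw_ne N), mul_one]
    simp only [heq]
    exact hder_tend.div hGw_tend hgw
  -- summability of T
  have hT_norm : ∀ n, 2 * ‖w‖ + 1 ≤ ‖γ n‖ →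
      ‖T n‖ ≤ 2 * ‖w‖ ^ p * (1 / ‖γ n‖) ^ (p + 1) := by
    intro n hn
    have hγpos : (0:ℝ) < ‖γ n‖ := by
      have : (0:ℝ) ≤ 2 * ‖w‖ := by positivity
      linarith
    have hclosed : T n = w ^ p * ((γ n)⁻¹) ^ p * (w - γ n)⁻¹ :=
      GLaux_closed_form p w (γ n) (hγ n) (hwγ n)
    rw [hclosed, norm_mul, norm_mul, norm_pow, norm_pow, norm_inv, norm_inv]
    have hwsub : ‖γ n‖ / 2 ≤ ‖w - γ n‖ := by
      have h1 : ‖γ n‖ - ‖w‖ ≤ ‖w - γ n‖ := by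
        rw [norm_sub_rev]
        exact norm_sub_norm_le _ _
      nlinarith [norm_nonneg w]
    have h2 : ‖w - γ n‖⁻¹ ≤ 2 / ‖γ n‖ := by
      rw [show (2 : ℝ) / ‖γ n‖ = (‖γ n‖ / 2)⁻¹ by rw [inv_div]]
      exact inv_anti₀ (by positivity) hwsub
    calc ‖w‖ ^ p * (‖γ n‖⁻¹) ^ p * ‖w - γ n‖⁻¹
        ≤ ‖w‖ ^ p * (‖γ n‖⁻¹) ^ p * (2 / ‖γ n‖) := by
          gcongr
      _ = 2 * ‖w‖ ^ p * (1 / ‖γ n‖) ^ (p + 1) := by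
          rw [one_div, pow_succ]
          ring
  have hTsummable : Summable T := by
    refine Summable.of_norm_bounded_eventually
      (g := fun n => 2 * ‖w‖ ^ p * (1 / ‖γ n‖) ^ (p + 1)) (hgenus.mul_left _) ?_
    have h0 : Tendsto (fun n => (1 / ‖γ n‖) ^ (p + 1)) cofinite (nhds 0) :=
      hgenus.tendsto_cofinite_zero
    have hlt : (0:ℝ) < (1 / (2 * ‖w‖ + 1)) ^ (p + 1) := by positivity
    have hev : ∀ᶠ n in cofinite, 2 * ‖w‖ + 1 ≤ ‖γ n‖ := by
      filter_upwards [h0.eventually_lt_const hlt] with n hn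
      have hγpos : (0:ℝ) < ‖γ n‖ := norm_pos_iff.mpr (hγ n)
      have h1 : 1 / ‖γ n‖ < 1 / (2 * ‖w‖ + 1) := by
        have := (pow_lt_pow_iff_left₀ (by positivity) (by positivity)
          (Nat.succ_ne_zero p)).mp hn
        exact this
      have h2 : 2 * ‖w‖ + 1 < ‖γ n‖ := by
        rw [div_lt_div_iff₀ hγpos (by positivity)] at h1
        linarith
      linarith
    filter_upwards [hev] with n hn using hT_norm n hn
  have hts : (∑' n, T n) = deriv g w / g w :=
    tendsto_nhds_unique hTsummable.hasSum.tendsto_sum_nat hL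
  obtain ⟨π, hπ⟩ := hrearr
  have hTperm : Tendsto (fun N => ∑ n ∈ range N, T (π n)) atTop (nhds (deriv g w / g w)) := by
    have hs : Summable (fun n => T (π n)) := π.summable_iff.mpr hTsummable
    have h := hs.hasSum.tendsto_sum_nat
    rwa [π.tsum_eq T, hts] at h
  have hcorr : Tendsto
      (fun N => ∑ r ∈ Icc 1 p, w ^ (r - 1) * ∑ n ∈ range N, ((γ (π n))⁻¹) ^ r)
      atTop (nhds 0) := by
    have h : Tendsto
        (fun N => ∑ r ∈ Icc 1 p, w ^ (r - 1) * ∑ n ∈ range N, ((γ (π n))⁻¹) ^ r)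
        atTop (nhds (∑ r ∈ Icc 1 p, w ^ (r - 1) * 0)) :=
      tendsto_finset_sum _ (fun r hr => (hπ r hr).const_mul _)
    simpa using h
  have hA : Tendsto (fun N => ∑ n ∈ range N, (w - γ (π n))⁻¹) atTop
      (nhds (deriv g w / g w)) := by
    have heq : ∀ N, ∑ n ∈ range N, (w - γ (π n))⁻¹
        = ∑ n ∈ range N, T (π n)
          - ∑ r ∈ Icc 1 p, w ^ (r - 1) * ∑ n ∈ range N, ((γ (π n))⁻¹) ^ r := by
      intro N
      rw [eq_sub_iff_add_eq]
      rw [hTdef]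
      simp only [Finset.sum_add_distrib]
      congr 1
      rw [Finset.sum_comm]
      refine Finset.sum_congr rfl fun r _ => ?_
      rw [Finset.mul_sum]
    simp only [heq]
    simpa using hTperm.sub hcorr
  -- value of the limit
  have hS : deriv g w / g w = -(q : ℂ) / w := by
    rcases Nat.eq_zero_or_pos q with hq | hq
    · subst hq
      have hfg : f = g := funext fun z => by rw [hf z, pow_zero, one_mul]
      rw [← hfg, hw]
      simp
    · have hw0 : w ≠ 0 := by
        intro h
        apply hcon
        apply hZsub
        show f w = 0
        rw [hf w, h, zero_pow (by omega), zero_mul]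
      have hd : HasDerivAt f ((q:ℂ) * w ^ (q - 1) * g w + w ^ q * deriv g w) w := by
        have h := (hasDerivAt_pow q w).mul (hgdiff w).hasDerivAt
        have hfeq : f = fun z => z ^ q * g z := funext hf
        rw [hfeq]
        exact h
      have h0 : (q:ℂ) * w ^ (q - 1) * g w + w ^ q * deriv g w = 0 := by
        rw [← hd.deriv, hw]
      have hwq : w ^ q = w ^ (q - 1) * w := by
        rw [← pow_succ]
        congr 1
        omega
      have hwq1 : w ^ (q - 1) ≠ 0 := pow_ne_zero _ hw0
      rw [hwq] at h0
      have h1 : w ^ (q - 1) * ((q:ℂ) * g w + w * deriv g w) = w ^ (q - 1) * 0 := by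
        rw [mul_zero]
        linear_combination h0
      have h2 := mul_left_cancel₀ hwq1 h1
      rw [div_eq_div_iff hgw hw0]
      linear_combination h2
  rw [hS] at hA
  -- separation
  obtain ⟨φ, s, hφs, hsw⟩ := geometric_hahn_banach_closed_point
    ((convex_convexHull ℝ Z).closure) isClosed_closure hcon
  set L : ℂ → ℝ := fun z => φ ((starRingEnd ℂ) z) with hLdef
  have hLsum : ∀ (N : ℕ) (a : ℕ → ℂ), L (∑ n ∈ range N, a n) = ∑ n ∈ range N, L (a n) := by
    intro N a
    rw [hLdef]
    simp only [map_sum]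
  have hLinv : ∀ a : ℂ, a ≠ 0 → L a⁻¹ = (Complex.normSq a)⁻¹ * φ a := by
    intro a ha
    have h1 : (starRingEnd ℂ) a⁻¹ = ((Complex.normSq a)⁻¹ : ℝ) • a := by
      rw [map_inv₀, Complex.inv_def]
      rw [Complex.normSq_conj, Complex.conj_conj, Complex.real_smul]
      push_cast
      ring
    rw [hLdef]
    simp only
    rw [h1, map_smul, smul_eq_mul]
  have hφpos : ∀ z ∈ Z, 0 < φ (w - z) := by
    intro z hz
    have h1 := hφs z (hZsub hz)
    rw [map_sub]
    linarith
  have hLpos : ∀ z ∈ Z, 0 < L ((w - z)⁻¹) := by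
    intro z hz
    have hne : w - z ≠ 0 := by
      rw [sub_ne_zero]
      rintro rfl
      exact hcon (hZsub hz)
    rw [hLinv _ hne]
    have h1 := hφpos z hz
    have h2 : 0 < Complex.normSq (w - z) := Complex.normSq_pos.mpr hne
    positivity
  have hLcont : Continuous L := φ.continuous.comp Complex.continuous_conj
  have hfinal : Tendsto (fun N => ∑ n ∈ range N, L ((w - γ (π n))⁻¹)) atTop
      (nhds (L (-(q:ℂ) / w))) := by
    have h := (hLcont.tendsto _).comp hA
    exact h.congr fun N => hLsum N _
  have ht0 : 0 < L ((w - γ (π 0))⁻¹) := hLpos _ (hγZ _)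
  have hge : L ((w - γ (π 0))⁻¹) ≤ L (-(q:ℂ) / w) := by
    refine ge_of_tendsto hfinal ?_
    filter_upwards [eventually_ge_atTop 1] with N hN
    exact Finset.single_le_sum (fun i _ => (hLpos _ (hγZ _)).le)
      (Finset.mem_range.mpr (by omega))
  have hle : L (-(q:ℂ) / w) ≤ 0 := by
    rcases Nat.eq_zero_or_pos q with hq | hq
    · subst hq
      simp [hLdef]
    · have h0Z : (0:ℂ) ∈ Z := by
        show f 0 = 0
        rw [hf 0, zero_pow (by omega), zero_mul]
      have hw0 : w ≠ 0 := by
        rintro rfl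
        exact hcon (hZsub h0Z)
      have heq : -(q:ℂ) / w = (-(q:ℝ)) • (w⁻¹ : ℂ) := by
        rw [Complex.real_smul]
        push_cast
        ring
      have hsmul : L ((-(q:ℝ)) • (w⁻¹ : ℂ)) = (-(q:ℝ)) * L (w⁻¹ : ℂ) := by
        rw [hLdef]
        simp only
        rw [Complex.real_smul, map_mul, Complex.conj_ofReal, ← Complex.real_smul,
          map_smul, smul_eq_mul]
      have hφw : 0 < φ w := by
        have h1 := hφs 0 (hZsub h0Z)
        rw [map_zero] at h1
        linarith
      have hLw : 0 < L (w⁻¹ : ℂ) := by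
        rw [hLinv _ hw0]
        have h2 : 0 < Complex.normSq w := Complex.normSq_pos.mpr hw0
        positivity
      rw [heq, hsmul]
      have hq0 : (0:ℝ) ≤ (q:ℝ) := Nat.cast_nonneg q
      nlinarith
  linarith
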